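/- Let γ : ℝ → ℝ be continuously differentiable, 1-periodic, with γ(t) ≥ 0 for all t, A := sup_t |γ′(t)| < ∞, and let ε > 0 satisfy 2ε·sup_t γ(t) ≤ 1. Let φ : ℝ² → ℝ be C¹ on an open neighborhood of the closure of Ω_ε. Define Eφ : Ω₀ → ℝ by Eφ(x) = φ(x) for x ∈ Ω_ε and Eφ(x₁,x₂) = φ(x₁, 2εγ(x₁/ε) − x₂) for x ∈ Ω₀ \ Ω_ε. Then Eφ is differentiable at almost every point of Ω₀ and ∫_{Ω₀} (Eφ(x)² + ‖∇Eφ(x)‖²) dx ≤ (2 + 2A² + 2A√(1+A²)) · ∫_{Ω_ε} (φ(x)² + ‖∇φ(x)‖²) dx. -/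

import Mathlib

open MeasureTheory Set
open scoped Classical

/-- first partial derivative of a function on `ℝ²` -/
noncomputable def pd1 (u : ℝ × ℝ → ℝ) (x : ℝ × ℝ) : ℝ := fderiv ℝ u x (1, 0)

/-- second partial derivative of a function on `ℝ²` -/
noncomputable def pd2 (u : ℝ × ℝ → ℝ) (x : ℝ × ℝ) : ℝ := fderiv ℝ u x (0, 1)

lemma quad_bound (A s a b g : ℝ) (hA : 0 ≤ A) (hg : |g| ≤ A)
    (hs : s ^ 2 = 1 + A ^ 2) (hAs : A ≤ s) :
    (a + 2 * g * b) ^ 2 + b ^ 2 ≤ (1 + 2 * A ^ 2 + 2 * A * s) * (a ^ 2 + b ^ 2) := by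
  have hs0 : 0 < s + A := by nlinarith [sq_nonneg s]
  obtain ⟨hg1, hg2⟩ := abs_le.mp hg
  have hgA : g ^ 2 ≤ A ^ 2 := sq_le_sq' hg1 hg2
  have key : 0 ≤ (s + A) *
      ((1 + 2 * A ^ 2 + 2 * A * s) * (a ^ 2 + b ^ 2) - ((a + 2 * g * b) ^ 2 + b ^ 2)) := by
    rcases le_total 0 (a * b) with hab | hab
    · have id1 : (s + A) *
          ((1 + 2 * A ^ 2 + 2 * A * s) * (a ^ 2 + b ^ 2) - ((a + 2 * g * b) ^ 2 + b ^ 2))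
          = 2 * A * ((s + A) * a - b) ^ 2 + 4 * (A ^ 2 - g ^ 2) * (s + A) * b ^ 2
            + 4 * (s + A) * (A - g) * (a * b) := by
        linear_combination (2 * A * b ^ 2) * hs
      rw [id1]
      have h1 : 0 ≤ 2 * A * ((s + A) * a - b) ^ 2 := by positivity
      have h2 : 0 ≤ 4 * (A ^ 2 - g ^ 2) * (s + A) * b ^ 2 :=
        mul_nonneg (mul_nonneg (by linarith) hs0.le) (sq_nonneg b)
      have h3 : 0 ≤ 4 * (s + A) * (A - g) * (a * b) :=
        mul_nonneg (mul_nonneg (by linarith) (by linarith)) hab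
      linarith
    · have id2 : (s + A) *
          ((1 + 2 * A ^ 2 + 2 * A * s) * (a ^ 2 + b ^ 2) - ((a + 2 * g * b) ^ 2 + b ^ 2))
          = 2 * A * ((s + A) * a + b) ^ 2 + 4 * (A ^ 2 - g ^ 2) * (s + A) * b ^ 2
            + 4 * (s + A) * (A + g) * (-(a * b)) := by
        linear_combination (2 * A * b ^ 2) * hs
      rw [id2]
      have h1 : 0 ≤ 2 * A * ((s + A) * a + b) ^ 2 := by positivity
      have h2 : 0 ≤ 4 * (A ^ 2 - g ^ 2) * (s + A) * b ^ 2 :=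
        mul_nonneg (mul_nonneg (by linarith) hs0.le) (sq_nonneg b)
      have h3 : 0 ≤ 4 * (s + A) * (A + g) * (-(a * b)) :=
        mul_nonneg (mul_nonneg (by linarith) (by linarith)) (by linarith)
      linarith
  nlinarith [key, hs0]


/-- Lemma 3.1 of the paper: the extension by reflection across the rough boundary
of a `C¹` function is a.e. differentiable on the flattened domain `Ω₀` and its
`H¹`-energy is controlled by that of the original function on `Ω_ε`, with the
explicit constant `2 + 2A² + 2A√(1+A²)` where `A = sup |γ'|`. -/
theorem extension_energy_estimate
    (γ : ℝ → ℝ) (hγ : ContDiff ℝ 1 γ) (hper : ∀ t, γ (t + 1) = γ t)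
    (hpos : ∀ t, 0 ≤ γ t)
    (A : ℝ) (hA : IsLUB (Set.range fun t => |deriv γ t|) A)
    (ε : ℝ) (hε : 0 < ε) (hεγ : ∀ t, 2 * ε * γ t ≤ 1)
    (Ωε : Set (ℝ × ℝ))
    (hΩε : Ωε = {x : ℝ × ℝ | 0 < x.1 ∧ x.1 < 1 ∧ ε * γ (x.1 / ε) < x.2 ∧ x.2 < 1})
    (Ω₀ : Set (ℝ × ℝ)) (hΩ₀ : Ω₀ = Set.Ioo (0:ℝ) 1 ×ˢ Set.Ioo (0:ℝ) 1)
    (φ : ℝ × ℝ → ℝ) (U : Set (ℝ × ℝ)) (hU : IsOpen U) (hUc : closure Ωε ⊆ U)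
    (hφ : ContDiffOn ℝ 1 φ U)
    (E : ℝ × ℝ → ℝ)
    (hE : E = fun x : ℝ × ℝ =>
      if x ∈ Ωε then φ x else φ (x.1, 2 * ε * γ (x.1 / ε) - x.2)) :
    (∀ᵐ x ∂(volume.restrict Ω₀), DifferentiableAt ℝ E x) ∧
    (∫ x in Ω₀, ((E x) ^ 2 + ((pd1 E x) ^ 2 + (pd2 E x) ^ 2))) ≤
      (2 + 2 * A ^ 2 + 2 * A * Real.sqrt (1 + A ^ 2)) *
        ∫ x in Ωε, ((φ x) ^ 2 + ((pd1 φ x) ^ 2 + (pd2 φ x) ^ 2)) := by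
  -- basic facts about γ
  have hγc : Continuous γ := hγ.continuous
  have hγd : Differentiable ℝ γ := hγ.differentiable one_ne_zero
  have hγ'c : Continuous (deriv γ) := hγ.continuous_deriv le_rfl
  have hA0 : 0 ≤ A := le_trans (abs_nonneg _) (hA.1 (Set.mem_range_self 0))
  have hAbd : ∀ t, |deriv γ t| ≤ A := fun t => hA.1 (Set.mem_range_self t)
  set s : ℝ := Real.sqrt (1 + A ^ 2) with hs_def
  have hss : 0 ≤ s := Real.sqrt_nonneg _
  have hs2 : s ^ 2 = 1 + A ^ 2 := Real.sq_sqrt (by positivity)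
  have hsA : A ≤ s := by nlinarith
  have hεγ' : ∀ t, ε * γ t ≤ 1 / 2 := fun t => by have := hεγ t; linarith
  have hεγ0 : ∀ t, 0 ≤ ε * γ t := fun t => mul_nonneg hε.le (hpos t)
  -- the reflection map
  set T : ℝ × ℝ → ℝ × ℝ := fun x => (x.1, 2 * ε * γ (x.1 / ε) - x.2) with hT_def
  have hTc : Continuous T := by
    apply continuous_fst.prodMk
    exact (continuous_const.mul (hγc.comp (continuous_fst.div_const ε))).sub continuous_snd
  have hTT : ∀ x, T (T x) = x := by intro x; simp [hT_def]
  have hTinj : Function.Injective T := Function.LeftInverse.injective hTT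
  have hTemb : MeasurableEmbedding T := hTc.measurable.measurableEmbedding hTinj
  have hTmp : MeasurePreserving T volume volume := by
    rw [MeasureTheory.Measure.volume_eq_prod]
    exact MeasurePreserving.skew_product (f := fun a : ℝ => a)
      (μa := (volume : Measure ℝ)) (μb := volume) (μc := (volume : Measure ℝ)) (μd := volume)
      (MeasurePreserving.id _)
      (g := fun a y => 2 * ε * γ (a / ε) - y)
      (by
        apply Measurable.sub
        · exact (continuous_const.mul (hγc.comp (continuous_fst.div_const ε))).measurable
        · exact measurable_snd)
      (Filter.Eventually.of_forall fun a =>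
        MeasureTheory.Measure.map_sub_left_eq_self volume (2 * ε * γ (a / ε)))
  -- the sets
  have hΩεopen : IsOpen Ωε := by
    have h1 : IsOpen {x : ℝ × ℝ | 0 < x.1} := isOpen_lt continuous_const continuous_fst
    have h2 : IsOpen {x : ℝ × ℝ | x.1 < 1} := isOpen_lt continuous_fst continuous_const
    have h3 : IsOpen {x : ℝ × ℝ | ε * γ (x.1 / ε) < x.2} :=
      isOpen_lt (continuous_const.mul (hγc.comp (continuous_fst.div_const ε))) continuous_snd
    have h4 : IsOpen {x : ℝ × ℝ | x.2 < 1} := isOpen_lt continuous_snd continuous_const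
    have : Ωε = {x : ℝ × ℝ | 0 < x.1} ∩ ({x : ℝ × ℝ | x.1 < 1} ∩
        ({x : ℝ × ℝ | ε * γ (x.1 / ε) < x.2} ∩ {x : ℝ × ℝ | x.2 < 1})) := by
      rw [hΩε]; ext x; simp [Set.mem_setOf_eq]
    rw [this]; exact h1.inter (h2.inter (h3.inter h4))
  set L : Set (ℝ × ℝ) :=
    {x : ℝ × ℝ | 0 < x.1 ∧ x.1 < 1 ∧ 0 < x.2 ∧ x.2 < ε * γ (x.1 / ε)} with hL_def
  have hLopen : IsOpen L := by
    have h1 : IsOpen {x : ℝ × ℝ | 0 < x.1} := isOpen_lt continuous_const continuous_fst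
    have h2 : IsOpen {x : ℝ × ℝ | x.1 < 1} := isOpen_lt continuous_fst continuous_const
    have h3 : IsOpen {x : ℝ × ℝ | 0 < x.2} := isOpen_lt continuous_const continuous_snd
    have h4 : IsOpen {x : ℝ × ℝ | x.2 < ε * γ (x.1 / ε)} :=
      isOpen_lt continuous_snd (continuous_const.mul (hγc.comp (continuous_fst.div_const ε)))
    have : L = {x : ℝ × ℝ | 0 < x.1} ∩ ({x : ℝ × ℝ | x.1 < 1} ∩
        ({x : ℝ × ℝ | 0 < x.2} ∩ {x : ℝ × ℝ | x.2 < ε * γ (x.1 / ε)})) := by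
      rw [hL_def]; ext x; simp [Set.mem_setOf_eq]
    rw [this]; exact h1.inter (h2.inter (h3.inter h4))
  have hΩ₀meas : MeasurableSet Ω₀ := by
    rw [hΩ₀]; exact (measurableSet_Ioo.prod measurableSet_Ioo)
  have hdisj : Disjoint Ωε L := by
    rw [Set.disjoint_left]
    intro x hx1 hx2
    rw [hΩε] at hx1
    rw [hL_def] at hx2
    exact absurd (lt_trans hx2.2.2.2 hx1.2.2.1) (lt_irrefl _)
  have hΩεsub : Ωε ⊆ Ω₀ := by
    intro x hx
    rw [hΩε] at hx
    rw [hΩ₀]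
    exact ⟨⟨hx.1, hx.2.1⟩, ⟨lt_of_le_of_lt (hεγ0 _) hx.2.2.1, hx.2.2.2⟩⟩
  have hLsub : L ⊆ Ω₀ := by
    intro x hx
    rw [hL_def] at hx
    rw [hΩ₀]
    refine ⟨⟨hx.1, hx.2.1⟩, ⟨hx.2.2.1, ?_⟩⟩
    have := hεγ' (x.1 / ε); linarith [hx.2.2.2]
  have hTL : ∀ x ∈ L, T x ∈ Ωε := by
    intro x hx
    rw [hL_def] at hx
    rw [hΩε]
    refine ⟨hx.1, hx.2.1, ?_, ?_⟩
    · simp only [hT_def]; linarith [hx.2.2.2]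
    · simp only [hT_def]
      have := hεγ (x.1 / ε); linarith [hx.2.2.1]
  -- the graph
  set G : Set (ℝ × ℝ) := {x : ℝ × ℝ | x.2 = ε * γ (x.1 / ε)} with hG_def
  have hGmeas : MeasurableSet G :=
    measurableSet_eq_fun measurable_snd
      (continuous_const.mul (hγc.comp (continuous_fst.div_const ε))).measurable
  have hGnull : volume G = 0 := by
    rw [MeasureTheory.Measure.volume_eq_prod, MeasureTheory.Measure.prod_apply hGmeas]
    have : ∀ a : ℝ, Prod.mk a ⁻¹' G = {ε * γ (a / ε)} := by
      intro a; ext y; simp [hG_def]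
    simp only [this, Real.volume_singleton]
    simp
  have hcover : Ω₀ \ (Ωε ∪ L) ⊆ G := by
    intro x hx
    obtain ⟨hx0, hxn⟩ := hx
    rw [hΩ₀] at hx0
    obtain ⟨⟨h01, h11⟩, ⟨h02, h12⟩⟩ := hx0
    rw [Set.mem_union] at hxn
    push_neg at hxn
    rcases lt_trichotomy x.2 (ε * γ (x.1 / ε)) with hlt | heq | hgt
    · exact absurd (by rw [hL_def]; exact ⟨h01, h11, h02, hlt⟩) hxn.2
    · exact heq
    · exact absurd (by rw [hΩε]; exact ⟨h01, h11, hgt, h12⟩) hxn.1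
  have haeeq : Ω₀ =ᵐ[volume] (Ωε ∪ L : Set (ℝ × ℝ)) := by
    rw [MeasureTheory.ae_eq_set]
    constructor
    · exact measure_mono_null hcover hGnull
    · rw [Set.diff_eq_empty.mpr (Set.union_subset hΩεsub hLsub)]; simp
  -- differentiability of φ on U
  have hφdiff : ∀ x ∈ U, DifferentiableAt ℝ φ x := fun x hx =>
    (hφ.differentiableOn one_ne_zero).differentiableAt (hU.mem_nhds hx)
  have hΩεU : Ωε ⊆ U := fun x hx => hUc (subset_closure hx)
  -- E agrees with φ on Ωε, with φ ∘ T on L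
  have hEΩε : Set.EqOn E φ Ωε := by
    intro x hx; rw [hE]; simp only [if_pos hx]
  have hEL : Set.EqOn E (φ ∘ T) L := by
    intro x hx
    have hxn : x ∉ Ωε := by
      intro hc
      rw [hΩε] at hc; rw [hL_def] at hx
      exact absurd (lt_trans hx.2.2.2 hc.2.2.1) (lt_irrefl _)
    rw [hE]; simp only [if_neg hxn]; rfl
  -- differentiability and derivatives on Ωε
  have hdiffΩε : ∀ x ∈ Ωε, DifferentiableAt ℝ E x ∧ fderiv ℝ E x = fderiv ℝ φ x := by
    intro x hx
    have heq : E =ᶠ[nhds x] φ := Filter.eventuallyEq_of_mem (hΩεopen.mem_nhds hx) hEΩε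
    have hd : DifferentiableAt ℝ φ x := hφdiff x (hΩεU hx)
    exact ⟨heq.differentiableAt_iff.mpr hd, heq.fderiv_eq⟩
  -- derivative of the scalar factor
  have hhd : ∀ t : ℝ, HasDerivAt (fun t => 2 * ε * γ (t / ε)) (2 * deriv γ (t / ε)) t := by
    intro t
    have h1 : HasDerivAt (fun t : ℝ => t / ε) (1 / ε) t := (hasDerivAt_id t).div_const ε
    have h2 : HasDerivAt γ (deriv γ (t / ε)) (t / ε) := (hγd (t / ε)).hasDerivAt
    have h3 := (h2.comp t h1).const_mul (2 * ε)
    refine h3.congr_deriv ?_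
    rw [mul_one_div, mul_div_assoc', mul_div_right_comm, mul_div_assoc, div_self hε.ne', mul_one]
  -- derivative of T
  have hTd : ∀ x : ℝ × ℝ, HasFDerivAt T
      ((ContinuousLinearMap.fst ℝ ℝ ℝ).prod
        ((2 * deriv γ (x.1 / ε)) • ContinuousLinearMap.fst ℝ ℝ ℝ -
          ContinuousLinearMap.snd ℝ ℝ ℝ)) x := by
    intro x
    apply HasFDerivAt.prodMk
    · exact hasFDerivAt_fst
    · exact ((hhd x.1).comp_hasFDerivAt x hasFDerivAt_fst).sub hasFDerivAt_snd
  -- differentiability and derivatives on L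
  have hdiffL : ∀ x ∈ L, DifferentiableAt ℝ E x ∧
      pd1 E x = pd1 φ (T x) + 2 * deriv γ (x.1 / ε) * pd2 φ (T x) ∧
      pd2 E x = -pd2 φ (T x) := by
    intro x hx
    have hTxU : T x ∈ U := hΩεU (hTL x hx)
    have hφd : DifferentiableAt ℝ φ (T x) := hφdiff _ hTxU
    have hcomp : HasFDerivAt (φ ∘ T)
        ((fderiv ℝ φ (T x)).comp
          ((ContinuousLinearMap.fst ℝ ℝ ℝ).prod
            ((2 * deriv γ (x.1 / ε)) • ContinuousLinearMap.fst ℝ ℝ ℝ -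
              ContinuousLinearMap.snd ℝ ℝ ℝ))) x :=
      (hφd.hasFDerivAt).comp x (hTd x)
    have heq : E =ᶠ[nhds x] (φ ∘ T) := Filter.eventuallyEq_of_mem (hLopen.mem_nhds hx) hEL
    have hdiff : DifferentiableAt ℝ E x :=
      heq.differentiableAt_iff.mpr hcomp.differentiableAt
    have hfd : fderiv ℝ E x = (fderiv ℝ φ (T x)).comp
        ((ContinuousLinearMap.fst ℝ ℝ ℝ).prod
          ((2 * deriv γ (x.1 / ε)) • ContinuousLinearMap.fst ℝ ℝ ℝ -
            ContinuousLinearMap.snd ℝ ℝ ℝ)) := by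
      rw [heq.fderiv_eq]; exact hcomp.fderiv
    refine ⟨hdiff, ?_, ?_⟩
    · show fderiv ℝ E x (1, 0) = _
      rw [hfd]
      have hv : ((ContinuousLinearMap.fst ℝ ℝ ℝ).prod
          ((2 * deriv γ (x.1 / ε)) • ContinuousLinearMap.fst ℝ ℝ ℝ -
            ContinuousLinearMap.snd ℝ ℝ ℝ)) ((1 : ℝ), (0 : ℝ))
          = ((1 : ℝ), (0 : ℝ)) + (2 * deriv γ (x.1 / ε)) • ((0 : ℝ), (1 : ℝ)) := by
        simp [ContinuousLinearMap.prod_apply]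
      rw [ContinuousLinearMap.comp_apply, hv, map_add, ContinuousLinearMap.map_smul]
      simp [pd1, pd2, smul_eq_mul]
    · show fderiv ℝ E x (0, 1) = _
      rw [hfd]
      have hv : ((ContinuousLinearMap.fst ℝ ℝ ℝ).prod
          ((2 * deriv γ (x.1 / ε)) • ContinuousLinearMap.fst ℝ ℝ ℝ -
            ContinuousLinearMap.snd ℝ ℝ ℝ)) ((0 : ℝ), (1 : ℝ))
          = -((0 : ℝ), (1 : ℝ)) := by
        simp [ContinuousLinearMap.prod_apply, Prod.ext_iff]
      rw [ContinuousLinearMap.comp_apply, hv, map_neg]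
      simp [pd2]
  -- a.e. differentiability
  have hae : ∀ᵐ x ∂(volume.restrict Ω₀), DifferentiableAt ℝ E x := by
    rw [MeasureTheory.ae_restrict_iff' hΩ₀meas]
    rw [MeasureTheory.ae_iff]
    apply measure_mono_null _ hGnull
    intro x hx
    simp only [Set.mem_setOf_eq] at hx
    push_neg at hx
    apply hcover
    refine ⟨hx.1, ?_⟩
    intro hc
    rcases hc with hc | hc
    · exact hx.2 (hdiffΩε x hc).1
    · exact hx.2 (hdiffL x hc).1
  refine ⟨hae, ?_⟩
  -- notation for the energies
  set Fφ : ℝ × ℝ → ℝ := fun y => (φ y) ^ 2 + ((pd1 φ y) ^ 2 + (pd2 φ y) ^ 2) with hFφ_def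
  set Gh : ℝ × ℝ → ℝ := fun y =>
    (φ y) ^ 2 + ((pd1 φ y + 2 * deriv γ (y.1 / ε) * pd2 φ y) ^ 2 + (pd2 φ y) ^ 2) with hGh_def
  set FE : ℝ × ℝ → ℝ := fun x => (E x) ^ 2 + ((pd1 E x) ^ 2 + (pd2 E x) ^ 2) with hFE_def
  -- continuity of the energies on U
  have hfdc : ContinuousOn (fderiv ℝ φ) U := hφ.continuousOn_fderiv_of_isOpen hU le_rfl
  have hpd1c : ContinuousOn (pd1 φ) U := hfdc.clm_apply continuousOn_const
  have hpd2c : ContinuousOn (pd2 φ) U := hfdc.clm_apply continuousOn_const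
  have hφcU : ContinuousOn φ U := hφ.continuousOn
  have hFφc : ContinuousOn Fφ U := (hφcU.pow 2).add ((hpd1c.pow 2).add (hpd2c.pow 2))
  have hgc : ContinuousOn (fun y : ℝ × ℝ => 2 * deriv γ (y.1 / ε)) U :=
    (continuous_const.mul (hγ'c.comp (continuous_fst.div_const ε))).continuousOn
  have hGhc : ContinuousOn Gh U :=
    (hφcU.pow 2).add ((((hpd1c.add (hgc.mul hpd2c)).pow 2)).add (hpd2c.pow 2))
  -- compactness and integrability
  have hΩεbd : Ωε ⊆ Set.Icc (0:ℝ) 1 ×ˢ Set.Icc (0:ℝ) 1 := by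
    intro x hx; rw [hΩε] at hx
    exact ⟨⟨hx.1.le, hx.2.1.le⟩, ⟨(le_of_lt (lt_of_le_of_lt (hεγ0 _) hx.2.2.1)), hx.2.2.2.le⟩⟩
  have hcompact : IsCompact (closure Ωε) :=
    (isCompact_Icc.prod isCompact_Icc).of_isClosed_subset isClosed_closure
      (closure_minimal hΩεbd (isClosed_Icc.prod isClosed_Icc))
  have hFφint : IntegrableOn Fφ (closure Ωε) :=
    (hFφc.mono hUc).integrableOn_compact hcompact
  have hFφintΩε : IntegrableOn Fφ Ωε := hFφint.mono_set subset_closure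
  have hGhint : IntegrableOn Gh (closure Ωε) :=
    (hGhc.mono hUc).integrableOn_compact hcompact
  -- the image of L under T
  have hTLsub : T '' L ⊆ Ωε := by
    rintro y ⟨x, hx, rfl⟩; exact hTL x hx
  have hLmeas : MeasurableSet L := hLopen.measurableSet
  have hTLmeas : MeasurableSet (T '' L) := hTemb.measurableSet_image.mpr hLmeas
  have hGhintTL : IntegrableOn Gh (T '' L) :=
    hGhint.mono_set (Set.Subset.trans hTLsub subset_closure)
  -- FE coincides with the appropriate energies
  have hFEΩε : Set.EqOn FE Fφ Ωε := by
    intro x hx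
    have h1 : E x = φ x := hEΩε hx
    have h2 : pd1 E x = pd1 φ x := by
      show fderiv ℝ E x (1, 0) = fderiv ℝ φ x (1, 0)
      rw [(hdiffΩε x hx).2]
    have h3 : pd2 E x = pd2 φ x := by
      show fderiv ℝ E x (0, 1) = fderiv ℝ φ x (0, 1)
      rw [(hdiffΩε x hx).2]
    simp only [hFE_def, hFφ_def, h1, h2, h3]
  have hFEL : Set.EqOn FE (Gh ∘ T) L := by
    intro x hx
    obtain ⟨-, h2, h3⟩ := hdiffL x hx
    have h1 : E x = φ (T x) := hEL hx
    have hfst : (T x).1 = x.1 := rfl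
    simp only [hFE_def, hGh_def, Function.comp_apply, h1, h2, h3, hfst]
    ring
  -- integrability of FE
  have hFEintΩε : IntegrableOn FE Ωε := hFφintΩε.congr_fun hFEΩε.symm hΩεopen.measurableSet
  have hGhTint : IntegrableOn (Gh ∘ T) L := (hTmp.integrableOn_image hTemb).mp hGhintTL
  have hFEintL : IntegrableOn FE L := hGhTint.congr_fun hFEL.symm hLmeas
  -- change of variables
  have hchg : ∫ x in L, (Gh ∘ T) x = ∫ y in T '' L, Gh y :=
    (hTmp.setIntegral_image_emb hTemb Gh L).symm
  -- pointwise bound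
  have hC1 : (1:ℝ) ≤ 1 + 2 * A ^ 2 + 2 * A * s := by nlinarith
  have hGhle : ∀ y, Gh y ≤ (1 + 2 * A ^ 2 + 2 * A * s) * Fφ y := by
    intro y
    have hq := quad_bound A s (pd1 φ y) (pd2 φ y) (deriv γ (y.1 / ε)) hA0
      (hAbd (y.1 / ε)) hs2 hsA
    have hφ2 : (φ y) ^ 2 ≤ (1 + 2 * A ^ 2 + 2 * A * s) * (φ y) ^ 2 :=
      le_mul_of_one_le_left (sq_nonneg _) hC1
    simp only [hGh_def, hFφ_def]
    nlinarith [hq, hφ2]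
  have hFφ0 : ∀ y, 0 ≤ Fφ y := by intro y; simp only [hFφ_def]; positivity
  have hCpos : (0:ℝ) ≤ 1 + 2 * A ^ 2 + 2 * A * s := by linarith
  -- integral comparisons
  have hIm1 : ∫ y in T '' L, Gh y ≤
      ∫ y in T '' L, (1 + 2 * A ^ 2 + 2 * A * s) * Fφ y :=
    setIntegral_mono_on hGhintTL
      ((hFφintΩε.mono_set hTLsub).const_mul _) hTLmeas (fun y _ => hGhle y)
  have hIm2 : ∫ y in T '' L, (1 + 2 * A ^ 2 + 2 * A * s) * Fφ y
      = (1 + 2 * A ^ 2 + 2 * A * s) * ∫ y in T '' L, Fφ y := by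
    exact MeasureTheory.integral_const_mul _ _
  have hIm3 : ∫ y in T '' L, Fφ y ≤ ∫ y in Ωε, Fφ y :=
    setIntegral_mono_set hFφintΩε
      (Filter.Eventually.of_forall fun y => hFφ0 y)
      (Filter.Eventually.of_forall (fun y hy => hTLsub hy) : (T '' L : Set (ℝ × ℝ)) ≤ᵐ[volume] Ωε)
  -- final computation
  have hsplit : ∫ x in Ω₀, FE x = (∫ x in Ωε, FE x) + ∫ x in L, FE x := by
    rw [setIntegral_congr_set haeeq]
    exact setIntegral_union hdisj hLmeas hFEintΩε hFEintL
  have hfinal : ∫ x in Ω₀, FE x ≤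
      (2 + 2 * A ^ 2 + 2 * A * s) * ∫ y in Ωε, Fφ y := by
    rw [hsplit, setIntegral_congr_fun hΩεopen.measurableSet hFEΩε,
      setIntegral_congr_fun hLmeas hFEL, hchg]
    have hIm4 : ∫ y in T '' L, Gh y ≤ (1 + 2 * A ^ 2 + 2 * A * s) * ∫ y in Ωε, Fφ y := by
      refine le_trans hIm1 ?_
      rw [hIm2]
      exact mul_le_mul_of_nonneg_left hIm3 hCpos
    linarith [hIm4]
  exact hfinal
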